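/- For any family 𝒯 of complete L-theories, RS(𝒯) = RS(Cl_E(𝒯)); moreover, if 𝒯 is nonempty and e-totally transcendental, then ds(𝒯) = ds(Cl_E(𝒯)). -/

import Mathlib

open FirstOrder Language Cardinal Set

universe u v w

variable {L : FirstOrder.Language.{u, v}}

/-- A complete theory: a satisfiable set of sentences containing each sentence or its
negation (`Theory.IsMaximal` in Mathlib). -/
abbrev CTheory (L : FirstOrder.Language.{u, v}) : Type max u v :=
  {T : L.Theory // T.IsMaximal}

/-- The neighbourhood `𝒯_φ = {T ∈ 𝒯 | φ ∈ T}`. -/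
def nbhd (𝒯 : Set (CTheory L)) (φ : L.Sentence) : Set (CTheory L) :=
  {T | T ∈ 𝒯 ∧ φ ∈ T.1}

/-- `T` is an accumulation point of `𝒯` if for every sentence `φ ∈ T` the set `𝒯_φ` is
infinite. -/
def IsAccPoint (𝒯 : Set (CTheory L)) (T : CTheory L) : Prop :=
  ∀ φ : L.Sentence, φ ∈ T.1 → (nbhd 𝒯 φ).Infinite

/-- The `E`-closure of `𝒯`: `𝒯` together with all its accumulation points. -/
def ClE (𝒯 : Set (CTheory L)) : Set (CTheory L) :=
  𝒯 ∪ {T | IsAccPoint 𝒯 T}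

/-- The `e`-spectrum of `𝒯`: the cardinality of the set of accumulation points of `𝒯`. -/
noncomputable def eSp (𝒯 : Set (CTheory L)) : Cardinal :=
  Cardinal.mk {T : CTheory L // IsAccPoint 𝒯 T}

/-- Two sentences are inconsistent if `{φ, ψ}` is unsatisfiable. -/
def Inconsistent (φ ψ : L.Sentence) : Prop :=
  ¬ FirstOrder.Language.Theory.IsSatisfiable ({φ, ψ} : L.Theory)

open Classical in
/-- `RSge α 𝒯` says `RS(𝒯) ≥ α`: `RS(𝒯) ≥ 0` iff `𝒯 ≠ ∅`; `RS(𝒯) ≥ 1` iff `𝒯` is infinite;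
for `β ≥ 1`, `RS(𝒯) ≥ β + 1` iff there are pairwise inconsistent sentences `φ_n`, `n ∈ ℕ`,
with `RS(𝒯_{φ_n}) ≥ β` for all `n`; for limit `λ`, `RS(𝒯) ≥ λ` iff `RS(𝒯) ≥ β` for all
`β < λ`. -/
noncomputable def RSge (α : Ordinal.{w}) : Set (CTheory L) → Prop :=
  @Ordinal.limitRecOn (fun _ => Set (CTheory L) → Prop) α
    (fun 𝒯 => 𝒯.Nonempty)
    (fun β ih 𝒯 =>
      if β = 0 then 𝒯.Infinite
      else ∃ φ : ℕ → L.Sentence,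
        (∀ m n : ℕ, m ≠ n → Inconsistent (φ m) (φ n)) ∧ ∀ k : ℕ, ih (nbhd 𝒯 (φ k)))
    (fun β _ ih 𝒯 => ∀ γ : Ordinal, ∀ h : γ < β, ih γ h 𝒯)

/-- `RS(𝒯) = α` for an ordinal `α`: `RS(𝒯) ≥ α` but not `RS(𝒯) ≥ α + 1`. -/
def RSeq (𝒯 : Set (CTheory L)) (α : Ordinal.{w}) : Prop :=
  RSge α 𝒯 ∧ ¬ RSge (α + 1) 𝒯

/-- `RS(𝒯) = ∞`: `RS(𝒯) ≥ α` for every ordinal `α`. -/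
def RSinf (𝒯 : Set (CTheory L)) : Prop :=
  ∀ α : Ordinal.{w}, RSge α 𝒯

/-- `ds(𝒯) = n` (relative to `RS(𝒯) = α`): `n` is the largest natural number for which
there exist `n` pairwise inconsistent sentences `φ_1, …, φ_n` with `RS(𝒯_{φ_i}) = α`. -/
def dsEq (𝒯 : Set (CTheory L)) (α : Ordinal.{w}) (n : ℕ) : Prop :=
  IsGreatest {m : ℕ | ∃ φ : Fin m → L.Sentence,
    (∀ i j : Fin m, i ≠ j → Inconsistent (φ i) (φ j)) ∧
    ∀ i : Fin m, RSeq (nbhd 𝒯 (φ i)) α} n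

/-- `𝒯` is `e`-minimal: for every sentence `φ`, `𝒯_φ` is finite or `𝒯_{¬φ}` is finite. -/
def EMinimal (𝒯 : Set (CTheory L)) : Prop :=
  ∀ φ : L.Sentence, (nbhd 𝒯 φ).Finite ∨ (nbhd 𝒯 φ.not).Finite

/-- `𝒯` is `a`-minimal: `𝒯` has infinitely many accumulation points and for every sentence
`φ`, `𝒯_φ` or `𝒯_{¬φ}` has only finitely many accumulation points. -/
def AMinimal (𝒯 : Set (CTheory L)) : Prop :=
  {T : CTheory L | IsAccPoint 𝒯 T}.Infinite ∧
  ∀ φ : L.Sentence,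
    {T : CTheory L | IsAccPoint (nbhd 𝒯 φ) T}.Finite ∨
    {T : CTheory L | IsAccPoint (nbhd 𝒯 φ.not) T}.Finite

/-- `𝒯` is `α`-minimal: `RS(𝒯) = α` and for every sentence `φ`, `RS(𝒯_φ) < α` or
`RS(𝒯_{¬φ}) < α`. -/
def AlphaMinimal (𝒯 : Set (CTheory L)) (α : Ordinal.{w}) : Prop :=
  RSeq 𝒯 α ∧
  ∀ φ : L.Sentence, ¬ RSge α (nbhd 𝒯 φ) ∨ ¬ RSge α (nbhd 𝒯 φ.not)


section AuxRankClE

variable {L : FirstOrder.Language.{u, v}}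

lemma CTheory.mem_inf_iff (T : CTheory L) (φ ψ : L.Sentence) :
    (φ ⊓ ψ) ∈ T.1 ↔ φ ∈ T.1 ∧ ψ ∈ T.1 := by
  rw [T.2.mem_iff_models, T.2.mem_iff_models, T.2.mem_iff_models,
    Theory.models_sentence_iff, Theory.models_sentence_iff, Theory.models_sentence_iff,
    ← forall_and]
  simp [Sentence.Realize]

lemma CTheory.not_mem_both (T : CTheory L) (φ : L.Sentence) :
    ¬ (φ ∈ T.1 ∧ φ.not ∈ T.1) := by
  rintro ⟨h1, h2⟩
  obtain ⟨M⟩ := T.2.1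
  have r1 := M.is_model.realize_of_mem _ h1
  have r2 := M.is_model.realize_of_mem _ h2
  rw [Sentence.realize_not] at r2
  exact r2 r1

lemma CTheory.exists_mem (T : CTheory L) : ∃ φ : L.Sentence, φ ∈ T.1 := by
  rcases T.2.2 ⊤ with h | h
  exacts [⟨_, h⟩, ⟨_, h⟩]

lemma nbhd_subset (𝒯 : Set (CTheory L)) (φ : L.Sentence) : nbhd 𝒯 φ ⊆ 𝒯 :=
  fun _ h => h.1

lemma isAccPoint_nbhd_iff (𝒯 : Set (CTheory L)) (φ : L.Sentence) (T : CTheory L) :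
    IsAccPoint (nbhd 𝒯 φ) T ↔ IsAccPoint 𝒯 T ∧ φ ∈ T.1 := by
  constructor
  · intro h
    have hφ : φ ∈ T.1 := by
      by_contra hn
      have hnot : φ.not ∈ T.1 := (T.2.2 φ).resolve_left hn
      have hinf := h φ.not hnot
      have hemp : nbhd (nbhd 𝒯 φ) φ.not = ∅ := by
        ext S
        simp only [nbhd, mem_setOf_eq, mem_empty_iff_false, iff_false]
        rintro ⟨⟨_, h1⟩, h2⟩
        exact S.not_mem_both φ ⟨h1, h2⟩
      rw [hemp] at hinf
      exact hinf Set.finite_empty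
    refine ⟨fun ψ hψ => ?_, hφ⟩
    exact (h ψ hψ).mono fun S hS => ⟨hS.1.1, hS.2⟩
  · rintro ⟨h, hφ⟩ ψ hψ
    have hmem : (φ ⊓ ψ) ∈ T.1 := (T.mem_inf_iff φ ψ).2 ⟨hφ, hψ⟩
    refine (h _ hmem).mono fun S hS => ?_
    obtain ⟨h1, h2⟩ := (S.mem_inf_iff φ ψ).1 hS.2
    exact ⟨⟨hS.1, h1⟩, h2⟩

lemma clE_nbhd (𝒯 : Set (CTheory L)) (φ : L.Sentence) :
    nbhd (ClE 𝒯) φ = ClE (nbhd 𝒯 φ) := by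
  ext T
  simp only [nbhd, ClE, mem_setOf_eq, mem_union]
  constructor
  · rintro ⟨hT | hT, hφ⟩
    · exact Or.inl ⟨hT, hφ⟩
    · exact Or.inr ((isAccPoint_nbhd_iff 𝒯 φ T).2 ⟨hT, hφ⟩)
  · rintro (⟨h1, h2⟩ | h)
    · exact ⟨Or.inl h1, h2⟩
    · obtain ⟨h1, h2⟩ := (isAccPoint_nbhd_iff 𝒯 φ T).1 h
      exact ⟨Or.inr h1, h2⟩

lemma clE_nonempty_iff (𝒯 : Set (CTheory L)) : (ClE 𝒯).Nonempty ↔ 𝒯.Nonempty := by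
  constructor
  · rintro ⟨T, hT | hT⟩
    · exact ⟨T, hT⟩
    · obtain ⟨φ, hφ⟩ := T.exists_mem
      obtain ⟨S, hS⟩ := (hT φ hφ).nonempty
      exact ⟨S, hS.1⟩
  · rintro ⟨T, hT⟩
    exact ⟨T, Or.inl hT⟩

lemma clE_infinite_iff (𝒯 : Set (CTheory L)) : (ClE 𝒯).Infinite ↔ 𝒯.Infinite := by
  constructor
  · intro h
    by_contra hfin
    rw [Set.not_infinite] at hfin
    have heq : ClE 𝒯 = 𝒯 := by
      apply subset_antisymm _ subset_union_left
      rintro T (hT | hT)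
      · exact hT
      · obtain ⟨φ, hφ⟩ := T.exists_mem
        exact absurd (hfin.subset (nbhd_subset 𝒯 φ)) (hT φ hφ)
    rw [heq] at h
    exact h hfin
  · exact fun h => h.mono subset_union_left

lemma RSge_zero (𝒯 : Set (CTheory L)) : RSge (0 : Ordinal.{w}) 𝒯 ↔ 𝒯.Nonempty := by
  unfold RSge
  rw [Ordinal.limitRecOn_zero]

lemma RSge_one (𝒯 : Set (CTheory L)) : RSge ((0 : Ordinal.{w}) + 1) 𝒯 ↔ 𝒯.Infinite := by
  unfold RSge
  rw [Ordinal.add_one_eq_succ, Ordinal.limitRecOn_succ, if_pos rfl]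

lemma RSge_succ {β : Ordinal.{w}} (hβ : β ≠ 0) (𝒯 : Set (CTheory L)) :
    RSge (β + 1) 𝒯 ↔ ∃ φ : ℕ → L.Sentence,
      (∀ m n : ℕ, m ≠ n → Inconsistent (φ m) (φ n)) ∧
      ∀ k : ℕ, RSge β (nbhd 𝒯 (φ k)) := by
  unfold RSge
  rw [Ordinal.add_one_eq_succ, Ordinal.limitRecOn_succ, if_neg hβ]

lemma RSge_limit {β : Ordinal.{w}} (hβ : Order.IsSuccLimit β) (𝒯 : Set (CTheory L)) :
    RSge β 𝒯 ↔ ∀ γ : Ordinal.{w}, γ < β → RSge γ 𝒯 := by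
  unfold RSge
  rw [Ordinal.limitRecOn_limit _ _ _ _ hβ]

lemma RSge_clE : ∀ α : Ordinal.{w}, ∀ 𝒯 : Set (CTheory L),
    RSge α 𝒯 ↔ RSge α (ClE 𝒯) := by
  intro α
  induction α using Ordinal.induction with
  | h α IH =>
    intro 𝒯
    rcases Ordinal.zero_or_succ_or_isSuccLimit α with rfl | ⟨β, rfl⟩ | hlim
    · rw [RSge_zero, RSge_zero, clE_nonempty_iff]
    · rcases eq_or_ne β 0 with rfl | hβ
      · rw [← Ordinal.add_one_eq_succ, RSge_one, RSge_one, clE_infinite_iff]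
      · rw [← Ordinal.add_one_eq_succ, RSge_succ hβ, RSge_succ hβ]
        have hlt : β < Order.succ β := Order.lt_succ β
        constructor
        · rintro ⟨φ, hinc, hk⟩
          refine ⟨φ, hinc, fun k => ?_⟩
          rw [clE_nbhd]
          exact (IH β hlt (nbhd 𝒯 (φ k))).1 (hk k)
        · rintro ⟨φ, hinc, hk⟩
          refine ⟨φ, hinc, fun k => ?_⟩
          have := hk k
          rw [clE_nbhd] at this
          exact (IH β hlt (nbhd 𝒯 (φ k))).2 this
    · rw [RSge_limit hlim, RSge_limit hlim]
      exact forall₂_congr fun γ hγ => IH γ hγ 𝒯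

lemma RSeq_nbhd_clE (𝒯 : Set (CTheory L)) (φ : L.Sentence) (α : Ordinal.{w}) :
    RSeq (nbhd 𝒯 φ) α ↔ RSeq (nbhd (ClE 𝒯) φ) α := by
  rw [clE_nbhd]
  unfold RSeq
  rw [RSge_clE α (nbhd 𝒯 φ), RSge_clE (α + 1) (nbhd 𝒯 φ)]

end AuxRankClE

/-- Theorem 2.10: for any family `𝒯`, `RS(𝒯) = RS(Cl_E(𝒯))` (i.e. the rank
relations `RS(·) ≥ α` coincide for all ordinals `α`); moreover, if `𝒯` is nonempty and
`e`-totally transcendental, with `RS(𝒯) = α`, then `ds(𝒯) = ds(Cl_E(𝒯))`. -/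
theorem rank_degree_clE (𝒯 : Set (CTheory L)) :
    (∀ α : Ordinal.{w}, RSge α 𝒯 ↔ RSge α (ClE 𝒯)) ∧
    (𝒯.Nonempty → ∀ α : Ordinal.{w}, RSeq 𝒯 α →
      ∀ n : ℕ, (dsEq 𝒯 α n ↔ dsEq (ClE 𝒯) α n)) := by
  constructor
  · exact fun α => RSge_clE α 𝒯
  · intro _ α _ n
    unfold dsEq
    have hset : {m : ℕ | ∃ φ : Fin m → L.Sentence,
        (∀ i j : Fin m, i ≠ j → Inconsistent (φ i) (φ j)) ∧
        ∀ i : Fin m, RSeq (nbhd 𝒯 (φ i)) α} =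
      {m : ℕ | ∃ φ : Fin m → L.Sentence,
        (∀ i j : Fin m, i ≠ j → Inconsistent (φ i) (φ j)) ∧
        ∀ i : Fin m, RSeq (nbhd (ClE 𝒯) (φ i)) α} := by
      ext m
      simp only [mem_setOf_eq]
      constructor
      · rintro ⟨φ, h1, h2⟩
        exact ⟨φ, h1, fun i => (RSeq_nbhd_clE 𝒯 (φ i) α).mp (h2 i)⟩
      · rintro ⟨φ, h1, h2⟩
        exact ⟨φ, h1, fun i => (RSeq_nbhd_clE 𝒯 (φ i) α).mpr (h2 i)⟩
    rw [hset]
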